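/- Truncated NLL error bound: Let q̂_h be a KDE built from K i.i.d. samples of a model density q at each of CL evaluation points {y_{c,t}}, using a kernel bounded by κ with m₂ second moment, and suppose q is C² with |q''| ≤ M uniformly. Define the empirical truncated NLL L̂ = -(1/(CL)) Σ_{c,t} log max{q̂_h(y_{c,t}), ε} and the population truncated NLL L_ε = -(1/(CL)) Σ_{c,t} log max{q(y_{c,t}), ε}. Then for any δ ∈ (0,1), with probability at least 1-δ, |L̂ - L_ε| ≤ (κ/(ε h)) √(2 log(2CL/δ)/K) + (m₂ M / (2ε)) h². -/

import Mathlib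

open MeasureTheory ProbabilityTheory Real
set_option maxHeartbeats 1000000

lemma tnll_exp_le (s c z : ℝ) (hc : 0 < c) (h1 : -c ≤ z) (h2 : z ≤ c) :
    Real.exp (s * z) ≤ Real.cosh (s * c) + (z / c) * Real.sinh (s * c) := by
  have hl0 : 0 ≤ (c - z) / (2 * c) := div_nonneg (by linarith) (by linarith)
  have hl1 : 0 ≤ (c + z) / (2 * c) := div_nonneg (by linarith) (by linarith)
  have hsum : (c - z) / (2 * c) + (c + z) / (2 * c) = 1 := by
    rw [← add_div]; rw [div_eq_one_iff_eq (by positivity)]; ring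
  have hconv := convexOn_exp.2 (Set.mem_univ (-(s * c))) (Set.mem_univ (s * c))
    hl0 hl1 hsum
  have harg : ((c - z) / (2 * c)) • (-(s * c)) + ((c + z) / (2 * c)) • (s * c) = s * z := by
    simp only [smul_eq_mul]
    rw [div_mul_eq_mul_div, div_mul_eq_mul_div, ← add_div]
    rw [div_eq_iff (by positivity : (2:ℝ) * c ≠ 0)]; ring
  rw [harg] at hconv
  refine hconv.trans_eq ?_
  rw [Real.cosh_eq, Real.sinh_eq]
  simp only [smul_eq_mul]
  field_simp
  ring

lemma tnll_integrable_of_bound {Ω : Type*} [MeasurableSpace Ω] (P : Measure Ω)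
    [IsProbabilityMeasure P] (X : Ω → ℝ) (hX : Measurable X) (c : ℝ)
    (hb : ∀ ω, |X ω| ≤ c) : Integrable X P := by
  refine Integrable.mono' (integrable_const c) hX.aestronglyMeasurable ?_
  exact Filter.Eventually.of_forall fun ω => by simpa using hb ω

lemma tnll_mgf_le {Ω : Type*} [MeasurableSpace Ω] (P : Measure Ω) [IsProbabilityMeasure P]
    (X : Ω → ℝ) (hX : Measurable X) {c : ℝ} (hc : 0 < c) (hb : ∀ ω, |X ω| ≤ c)
    (h0 : ∫ ω, X ω ∂P = 0) (s : ℝ) :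
    mgf X P s ≤ Real.exp (s ^ 2 * c ^ 2 / 2) := by
  have hXint : Integrable X P := tnll_integrable_of_bound P X hX c hb
  have hpt : ∀ ω, Real.exp (s * X ω) ≤
      Real.cosh (s * c) + (X ω / c) * Real.sinh (s * c) := fun ω =>
    tnll_exp_le s c (X ω) hc (abs_le.mp (hb ω)).1 (abs_le.mp (hb ω)).2
  have hint1 : Integrable (fun ω => Real.exp (s * X ω)) P := by
    refine tnll_integrable_of_bound P _ ((hX.const_mul s).exp) (Real.exp (|s| * c)) ?_
    intro ω
    rw [abs_of_nonneg (Real.exp_nonneg _)]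
    apply Real.exp_le_exp.mpr
    calc s * X ω ≤ |s * X ω| := le_abs_self _
      _ = |s| * |X ω| := abs_mul _ _
      _ ≤ |s| * c := by
          exact mul_le_mul_of_nonneg_left (hb ω) (abs_nonneg s)
  have hint2 : Integrable (fun ω => Real.cosh (s * c) + (X ω / c) * Real.sinh (s * c)) P := by
    exact (integrable_const _).add (((hXint.div_const c).mul_const _))
  have : mgf X P s ≤ ∫ ω, (Real.cosh (s * c) + (X ω / c) * Real.sinh (s * c)) ∂P := by
    exact integral_mono hint1 hint2 hpt
  rw [integral_add (integrable_const _) ((hXint.div_const c).mul_const _)] at this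
  simp only [integral_const, measure_univ, probReal_univ, ENNReal.toReal_one, smul_eq_mul, one_mul] at this
  rw [integral_mul_const, integral_div, h0] at this
  simp only [zero_div, zero_mul, add_zero] at this
  calc mgf X P s ≤ Real.cosh (s * c) := this
    _ ≤ Real.exp ((s * c) ^ 2 / 2) := Real.cosh_le_exp_half_sq _
    _ = Real.exp (s ^ 2 * c ^ 2 / 2) := by rw [mul_pow]

lemma tnll_hoeffding_one_side {Ω : Type*} [MeasurableSpace Ω] (P : Measure Ω)
    [IsProbabilityMeasure P] {K : ℕ} (hK : 0 < K) (Y : Fin K → Ω → ℝ)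
    (hmeas : ∀ k, Measurable (Y k))
    (hindep : iIndepFun Y P)
    {c : ℝ} (hc : 0 < c) (hb : ∀ k ω, |Y k ω| ≤ c)
    (h0 : ∀ k, ∫ ω, Y k ω ∂P = 0) {a : ℝ} (ha : 0 < a) :
    (P {ω | a ≤ ∑ k, Y k ω}).toReal ≤ Real.exp (-(a ^ 2) / (2 * K * c ^ 2)) := by
  set s : ℝ := a / (K * c ^ 2) with hs
  have hKpos : (0:ℝ) < K := Nat.cast_pos.mpr hK
  have hspos : 0 < s := by positivity
  set S : Ω → ℝ := fun ω => ∑ k, Y k ω with hSdef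
  have hSfun : (∑ k, Y k) = S := by
    funext ω; simp [hSdef, Finset.sum_apply]
  have hSmeas : Measurable S := Finset.measurable_sum _ (fun k _ => hmeas k)
  have hSbd : ∀ ω, |S ω| ≤ K * c := by
    intro ω
    refine (Finset.abs_sum_le_sum_abs _ _).trans ?_
    calc ∑ k : Fin K, |Y k ω| ≤ ∑ _k : Fin K, c :=
          Finset.sum_le_sum fun k _ => hb k ω
      _ = K * c := by simp [Finset.sum_const, nsmul_eq_mul]
  have hSint : Integrable (fun ω => Real.exp (s * S ω)) P := by
    refine tnll_integrable_of_bound P _ ((hSmeas.const_mul s).exp) (Real.exp (|s| * (K * c))) ?_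
    intro ω
    rw [abs_of_nonneg (Real.exp_nonneg _)]
    apply Real.exp_le_exp.mpr
    calc s * S ω ≤ |s * S ω| := le_abs_self _
      _ = |s| * |S ω| := abs_mul _ _
      _ ≤ |s| * (K * c) := mul_le_mul_of_nonneg_left (hSbd ω) (abs_nonneg s)
  have hmgf : mgf S P s ≤ Real.exp (K * (s ^ 2 * c ^ 2 / 2)) := by
    rw [← hSfun, hindep.mgf_sum hmeas Finset.univ]
    calc ∏ k : Fin K, mgf (Y k) P s ≤ ∏ _k : Fin K, Real.exp (s ^ 2 * c ^ 2 / 2) :=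
          Finset.prod_le_prod (fun k _ => mgf_nonneg) fun k _ =>
            tnll_mgf_le P (Y k) (hmeas k) hc (hb k) (h0 k) s
      _ = Real.exp (K * (s ^ 2 * c ^ 2 / 2)) := by
          rw [Finset.prod_const, ← Real.exp_nat_mul]; simp [Finset.card_univ]
  have hch := measure_ge_le_exp_mul_mgf (μ := P) (X := S) a hspos.le hSint
  refine hch.trans ?_
  calc Real.exp (-s * a) * mgf S P s
      ≤ Real.exp (-s * a) * Real.exp (K * (s ^ 2 * c ^ 2 / 2)) :=
        mul_le_mul_of_nonneg_left hmgf (Real.exp_nonneg _)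
    _ = Real.exp (-s * a + K * (s ^ 2 * c ^ 2 / 2)) := (Real.exp_add _ _).symm
    _ = Real.exp (-(a ^ 2) / (2 * K * c ^ 2)) := by
        congr 1
        rw [hs]
        field_simp
        ring

lemma tnll_hoeffding {Ω : Type*} [MeasurableSpace Ω] (P : Measure Ω)
    [IsProbabilityMeasure P] {K : ℕ} (hK : 0 < K) (X : Fin K → Ω → ℝ)
    (hmeas : ∀ k, Measurable (X k))
    (hindep : iIndepFun X P)
    {c : ℝ} (hc : 0 < c) (hb : ∀ k ω, X k ω ∈ Set.Icc 0 c)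
    {m : ℝ} (hm : ∀ k, ∫ ω, X k ω ∂P = m) {a : ℝ} (ha : 0 < a) :
    (P {ω | a ≤ |(∑ k, X k ω) - K * m|}).toReal
      ≤ 2 * Real.exp (-(a ^ 2) / (2 * K * c ^ 2)) := by
  have k0 : Fin K := ⟨0, hK⟩
  have hXint : ∀ k, Integrable (X k) P := fun k =>
    tnll_integrable_of_bound P _ (hmeas k) c fun ω =>
      abs_le.mpr ⟨by linarith [(hb k ω).1], (hb k ω).2⟩
  have hm0 : 0 ≤ m := by
    rw [← hm k0]; exact integral_nonneg fun ω => (hb k0 ω).1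
  have hmc : m ≤ c := by
    rw [← hm k0]
    calc ∫ ω, X k0 ω ∂P ≤ ∫ _ω, c ∂P := integral_mono (hXint k0) (integrable_const c)
          fun ω => (hb k0 ω).2
      _ = c := by simp
  set Y : Fin K → Ω → ℝ := fun k ω => X k ω - m with hY
  set Y' : Fin K → Ω → ℝ := fun k ω => m - X k ω with hY'
  have hYmeas : ∀ k, Measurable (Y k) := fun k => (hmeas k).sub measurable_const
  have hY'meas : ∀ k, Measurable (Y' k) := fun k => measurable_const.sub (hmeas k)
  have hYindep : iIndepFun Y P :=
    hindep.comp (fun _ x => x - m) fun _ => measurable_id.sub measurable_const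
  have hY'indep : iIndepFun Y' P :=
    hindep.comp (fun _ x => m - x) fun _ => measurable_const.sub measurable_id
  have hYb : ∀ k ω, |Y k ω| ≤ c := fun k ω =>
    abs_le.mpr ⟨by simp only [hY]; linarith [(hb k ω).1], by simp only [hY]; linarith [(hb k ω).2]⟩
  have hY'b : ∀ k ω, |Y' k ω| ≤ c := fun k ω => by
    rw [hY']; rw [abs_sub_comm]; exact hYb k ω
  have hY0 : ∀ k, ∫ ω, Y k ω ∂P = 0 := by
    intro k
    rw [hY]
    rw [integral_sub (hXint k) (integrable_const m), hm k, integral_const]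
    simp
  have hY'0 : ∀ k, ∫ ω, Y' k ω ∂P = 0 := by
    intro k
    rw [hY']
    rw [integral_sub (integrable_const m) (hXint k), hm k, integral_const]
    simp
  have h1 := tnll_hoeffding_one_side P hK Y hYmeas hYindep hc hYb hY0 ha
  have h2 := tnll_hoeffding_one_side P hK Y' hY'meas hY'indep hc hY'b hY'0 ha
  have hsumY : ∀ ω, ∑ k, Y k ω = (∑ k, X k ω) - K * m := by
    intro ω
    rw [hY]
    rw [Finset.sum_sub_distrib]
    simp [Finset.sum_const, Finset.card_univ, nsmul_eq_mul]
  have hsumY' : ∀ ω, ∑ k, Y' k ω = -((∑ k, X k ω) - K * m) := by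
    intro ω
    rw [hY']
    rw [Finset.sum_sub_distrib]
    simp [Finset.sum_const, Finset.card_univ, nsmul_eq_mul]
  have hsub : {ω | a ≤ |(∑ k, X k ω) - K * m|}
      ⊆ {ω | a ≤ ∑ k, Y k ω} ∪ {ω | a ≤ ∑ k, Y' k ω} := by
    intro ω hω
    simp only [Set.mem_setOf_eq] at hω
    rcases le_abs.mp hω with h | h
    · left; rw [Set.mem_setOf_eq, hsumY]; exact h
    · right; rw [Set.mem_setOf_eq, hsumY']; exact h
  calc (P {ω | a ≤ |(∑ k, X k ω) - K * m|}).toReal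
      ≤ (P ({ω | a ≤ ∑ k, Y k ω} ∪ {ω | a ≤ ∑ k, Y' k ω})).toReal := by
        refine ENNReal.toReal_mono (measure_ne_top _ _) (measure_mono hsub)
    _ ≤ (P {ω | a ≤ ∑ k, Y k ω} + P {ω | a ≤ ∑ k, Y' k ω}).toReal :=
        ENNReal.toReal_mono (ENNReal.add_ne_top.mpr ⟨measure_ne_top _ _, measure_ne_top _ _⟩)
          (measure_union_le _ _)
    _ ≤ (P {ω | a ≤ ∑ k, Y k ω}).toReal + (P {ω | a ≤ ∑ k, Y' k ω}).toReal :=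
        ENNReal.toReal_add_le
    _ ≤ Real.exp (-(a ^ 2) / (2 * K * c ^ 2)) + Real.exp (-(a ^ 2) / (2 * K * c ^ 2)) :=
        add_le_add h1 h2
    _ = 2 * Real.exp (-(a ^ 2) / (2 * K * c ^ 2)) := by ring

lemma tnll_taylor {q : ℝ → ℝ} (hq : ContDiff ℝ 2 q) {M : ℝ}
    (hM : ∀ t, |deriv (deriv q) t| ≤ M) (x y : ℝ) :
    |q x - q y - deriv q y * (x - y)| ≤ M / 2 * (x - y) ^ 2 := by
  have hq2 : ContDiff ℝ (1 + 1) q := by norm_num; exact hq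
  have hd1 : Differentiable ℝ q := (contDiff_succ_iff_deriv.mp hq2).1
  have hq1 : ContDiff ℝ 1 (deriv q) := (contDiff_succ_iff_deriv.mp hq2).2.2
  have hd2 : Differentiable ℝ (deriv q) := (contDiff_one_iff_deriv.mp hq1).1
  have hc2 : Continuous (deriv (deriv q)) := (contDiff_one_iff_deriv.mp hq1).2
  set g : ℝ → ℝ := fun t => q t + deriv q t * (x - t) with hgdef
  have hg : ∀ t, HasDerivAt g (deriv (deriv q) t * (x - t)) t := by
    intro t
    have h1 : HasDerivAt q (deriv q t) t := (hd1 t).hasDerivAt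
    have h2 : HasDerivAt (fun u => x - u) (-1) t := (hasDerivAt_id t).const_sub x
    have h3 : HasDerivAt (fun u => deriv q u * (x - u))
        (deriv (deriv q) t * (x - t) + deriv q t * (-1)) t :=
      ((hd2 t).hasDerivAt).mul h2
    have := h1.add h3
    exact this.congr_deriv (by ring)
  have hcont : Continuous fun t => deriv (deriv q) t * (x - t) :=
    hc2.mul (continuous_const.sub continuous_id)
  have hftc : ∫ t in y..x, deriv (deriv q) t * (x - t) = g x - g y :=
    intervalIntegral.integral_eq_sub_of_hasDerivAt (fun t _ => hg t)
      (hcont.intervalIntegrable _ _)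
  have hgx : g x = q x := by simp [hgdef]
  have hgy : g y = q y + deriv q y * (x - y) := rfl
  have hkey : q x - q y - deriv q y * (x - y) = ∫ t in y..x, deriv (deriv q) t * (x - t) := by
    rw [hftc, hgx, hgy]; ring
  have hM0 : 0 ≤ M := le_trans (abs_nonneg _) (hM 0)
  rw [hkey]
  rcases le_total y x with hyx | hxy
  · -- y ≤ x
    calc |∫ t in y..x, deriv (deriv q) t * (x - t)|
        ≤ ∫ t in y..x, |deriv (deriv q) t * (x - t)| :=
          intervalIntegral.abs_integral_le_integral_abs hyx
      _ ≤ ∫ t in y..x, M * (x - t) := by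
          apply intervalIntegral.integral_mono_on hyx
          · exact (hcont.abs).intervalIntegrable _ _
          · exact ((continuous_const.mul (continuous_const.sub continuous_id))).intervalIntegrable _ _
          · intro t ht
            rw [abs_mul, abs_of_nonneg (by linarith [ht.2] : (0:ℝ) ≤ x - t)]
            exact mul_le_mul_of_nonneg_right (hM t) (by linarith [ht.2])
      _ = M / 2 * (x - y) ^ 2 := by
          rw [intervalIntegral.integral_const_mul]
          have : ∫ t in y..x, (x - t) = ∫ t in y..x, (x - t) := rfl
          rw [intervalIntegral.integral_sub (intervalIntegrable_const)
            (intervalIntegral.intervalIntegrable_id)]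
          rw [intervalIntegral.integral_const, integral_id]
          simp only [smul_eq_mul]
          ring
  · -- x ≤ y
    rw [intervalIntegral.integral_symm, abs_neg]
    calc |∫ t in x..y, deriv (deriv q) t * (x - t)|
        ≤ ∫ t in x..y, |deriv (deriv q) t * (x - t)| :=
          intervalIntegral.abs_integral_le_integral_abs hxy
      _ ≤ ∫ t in x..y, M * (t - x) := by
          apply intervalIntegral.integral_mono_on hxy
          · exact (hcont.abs).intervalIntegrable _ _
          · exact ((continuous_const.mul (continuous_id.sub continuous_const))).intervalIntegrable _ _
          · intro t ht
            rw [abs_mul, abs_sub_comm, abs_of_nonneg (by linarith [ht.1] : (0:ℝ) ≤ t - x)]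
            exact mul_le_mul_of_nonneg_right (hM t) (by linarith [ht.1])
      _ = M / 2 * (x - y) ^ 2 := by
          rw [intervalIntegral.integral_const_mul]
          rw [intervalIntegral.integral_sub (intervalIntegral.intervalIntegrable_id)
            (intervalIntegrable_const)]
          rw [intervalIntegral.integral_const, integral_id]
          simp only [smul_eq_mul]
          ring

lemma tnll_log_max_lip {ε : ℝ} (hε : 0 < ε) (a b : ℝ) :
    |Real.log (max a ε) - Real.log (max b ε)| ≤ |a - b| / ε := by
  have key : ∀ u v : ℝ, ε ≤ u → ε ≤ v → u ≤ v → Real.log v - Real.log u ≤ (v - u) / ε := by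
    intro u v hu hv huv
    have hu0 : 0 < u := lt_of_lt_of_le hε hu
    have hv0 : 0 < v := lt_of_lt_of_le hε hv
    rw [← Real.log_div hv0.ne' hu0.ne']
    calc Real.log (v / u) ≤ v / u - 1 := Real.log_le_sub_one_of_pos (by positivity)
      _ = (v - u) / u := by field_simp
      _ ≤ (v - u) / ε := by gcongr
  have hmax : |max a ε - max b ε| ≤ |a - b| := abs_max_sub_max_le_abs a b ε
  have ha' : ε ≤ max a ε := le_max_right a ε
  have hb' : ε ≤ max b ε := le_max_right b ε
  have main : |Real.log (max a ε) - Real.log (max b ε)| ≤ |max a ε - max b ε| / ε := by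
    rcases le_total (max a ε) (max b ε) with hle | hle
    · rw [abs_sub_comm (Real.log (max a ε)) (Real.log (max b ε)),
        abs_sub_comm (max a ε) (max b ε),
        abs_of_nonneg (by
          have := Real.log_le_log (lt_of_lt_of_le hε ha') hle; linarith),
        abs_of_nonneg (by linarith)]
      exact key _ _ ha' hb' hle
    · rw [abs_of_nonneg (by
        have := Real.log_le_log (lt_of_lt_of_le hε hb') hle; linarith),
        abs_of_nonneg (by linarith)]
      exact key _ _ hb' ha' hle
  exact main.trans (by gcongr)

lemma tnll_mean {Ω : Type*} [MeasurableSpace Ω] (P : Measure Ω) [IsProbabilityMeasure P]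
    (Yk : Ω → ℝ) (hYk : Measurable Yk) (q : ℝ → ℝ) (hqm : Measurable q) (hqnn : ∀ t, 0 ≤ q t)
    (hlaw : Measure.map Yk P = MeasureTheory.volume.withDensity (fun t => ENNReal.ofReal (q t)))
    (f : ℝ → ℝ) (hf : Measurable f) :
    ∫ ω, f (Yk ω) ∂P = ∫ t, f t * q t := by
  rw [← integral_map hYk.aemeasurable hf.aestronglyMeasurable, hlaw]
  rw [show (fun t => ENNReal.ofReal (q t)) = (fun t => (((q t).toNNReal : NNReal) : ENNReal))
    from rfl, integral_withDensity_eq_integral_smul hqm.real_toNNReal f]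
  congr 1
  funext t
  rw [NNReal.smul_def, Real.coe_toNNReal _ (hqnn t), smul_eq_mul, mul_comm]

lemma tnll_bias {q Kker : ℝ → ℝ} {κ M m2 : ℝ} (hq : ContDiff ℝ 2 q)
    (hM : ∀ t, |deriv (deriv q) t| ≤ M)
    (hKkerMeas : Measurable Kker) (hKkerBdd : ∀ u, Kker u ∈ Set.Icc 0 κ)
    (hK1int : Integrable (fun u => u * Kker u))
    (hK2int : Integrable (fun u => u ^ 2 * Kker u))
    (hK1 : ∫ u, Kker u = 1) (hK0 : ∫ u, u * Kker u = 0)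
    (hK2 : ∫ u, u ^ 2 * Kker u = m2) (y h : ℝ) (hh : 0 < h) :
    |(∫ t, Kker ((y - t) / h) * q t) / h - q y| ≤ m2 * M / 2 * h ^ 2 := by
  have hKint : Integrable Kker := by
    by_contra hcon
    rw [integral_undef hcon] at hK1
    norm_num at hK1
  have hqcont : Continuous q := hq.continuous
  have hM0 : 0 ≤ M := le_trans (abs_nonneg _) (hM 0)
  set R : ℝ → ℝ := fun u => q (y - h * u) - q y - deriv q y * ((y - h * u) - y) with hRdef
  have hR : ∀ u, |R u| ≤ M / 2 * (h * u) ^ 2 := by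
    intro u
    have := tnll_taylor hq hM (y - h * u) y
    have harg : (y - h * u - y) = -(h * u) := by ring
    rw [hRdef]
    simpa [harg, neg_sq] using this
  set g : ℝ → ℝ := fun u => Kker u * q (y - h * u) with hgdef
  -- change of variables
  have step1 : ∫ t, Kker ((y - t) / h) * q t = h * ∫ u, g u := by
    have hfun : (fun t => Kker ((y - t) / h) * q t) = fun t => (fun s => g (s / h)) (y - t) := by
      funext t
      simp only [hgdef]
      congr 2
      rw [mul_div_cancel₀ _ hh.ne']
      ring
    rw [hfun]
    rw [integral_sub_left_eq_self (fun s => g (s / h)) MeasureTheory.volume y]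
    rw [MeasureTheory.Measure.integral_comp_div g h]
    rw [abs_of_pos hh, smul_eq_mul]
  have decomp : ∀ u, g u = q y * Kker u - (h * deriv q y) * (u * Kker u) + Kker u * R u := by
    intro u
    simp only [hgdef, hRdef]
    ring
  have hI1 : Integrable (fun u => q y * Kker u) := hKint.const_mul _
  have hI2 : Integrable (fun u => (h * deriv q y) * (u * Kker u)) := hK1int.const_mul _
  have hRcont : Continuous R := by
    rw [hRdef]
    fun_prop
  have hbound : ∀ u, ‖Kker u * R u‖ ≤ M / 2 * h ^ 2 * (u ^ 2 * Kker u) := by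
    intro u
    rw [Real.norm_eq_abs, abs_mul, abs_of_nonneg (hKkerBdd u).1]
    calc Kker u * |R u| ≤ Kker u * (M / 2 * (h * u) ^ 2) :=
          mul_le_mul_of_nonneg_left (hR u) (hKkerBdd u).1
      _ = M / 2 * h ^ 2 * (u ^ 2 * Kker u) := by ring
  have hI3 : Integrable (fun u => Kker u * R u) := by
    refine Integrable.mono' (hK2int.const_mul (M / 2 * h ^ 2))
      (hKkerMeas.mul hRcont.measurable).aestronglyMeasurable ?_
    exact Filter.Eventually.of_forall hbound
  have hgeq : g = fun u => (q y * Kker u - (h * deriv q y) * (u * Kker u))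
      + Kker u * R u := by
    funext u
    exact decomp u
  have hint : ∫ u, g u = q y + ∫ u, Kker u * R u := by
    rw [hgeq]
    beta_reduce
    have hI12 : Integrable (fun u => q y * Kker u - h * deriv q y * (u * Kker u)) := hI1.sub hI2
    rw [integral_add hI12 hI3, integral_sub hI1 hI2,
      integral_const_mul, integral_const_mul, hK1, hK0]
    ring
  have hRint : |∫ u, Kker u * R u| ≤ M / 2 * h ^ 2 * m2 := by
    calc |∫ u, Kker u * R u| = ‖∫ u, Kker u * R u‖ := (Real.norm_eq_abs _).symm
      _ ≤ ∫ u, ‖Kker u * R u‖ := norm_integral_le_integral_norm _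
      _ ≤ ∫ u, M / 2 * h ^ 2 * (u ^ 2 * Kker u) := by
          refine integral_mono hI3.norm (hK2int.const_mul _) ?_
          intro u
          exact hbound u
      _ = M / 2 * h ^ 2 * m2 := by rw [integral_const_mul, hK2]
  rw [step1, mul_div_cancel_left₀ _ hh.ne', hint]
  have harr : q y + (∫ u, Kker u * R u) - q y = ∫ u, Kker u * R u := by ring
  rw [harr]
  calc |∫ u, Kker u * R u| ≤ M / 2 * h ^ 2 * m2 := hRint
    _ = m2 * M / 2 * h ^ 2 := by ring

/-- Finite-(K,h) truncated NLL error bound.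
Let `q̂_h` be the KDE built from `K` i.i.d. samples of a C² model density `q`
(with `|q''| ≤ M`), evaluated at `N = C·L` points `y i`, with a kernel bounded by `κ`,
mass 1, zero first moment and second moment `m₂`. For the empirical truncated NLL
`L̂ = -(1/N) ∑ᵢ log max{q̂_h(yᵢ), ε}` and population truncated NLL
`Lε = -(1/N) ∑ᵢ log max{q(yᵢ), ε}`, for any `δ ∈ (0,1)`, with probability at least
`1 - δ`, `|L̂ - Lε| ≤ (κ/(ε h)) √(2 log(2N/δ)/K) + (m₂ M/(2ε)) h²`. -/
theorem truncated_nll_error_bound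
    {Ω : Type*} [MeasurableSpace Ω] (P : Measure Ω) [IsProbabilityMeasure P]
    (K : ℕ) (hK : 1 ≤ K) (Ysamp : Fin K → Ω → ℝ) (hYmeas : ∀ k, Measurable (Ysamp k))
    (q Kker : ℝ → ℝ) (κ M m2 ε : ℝ) (hκ : 0 ≤ κ) (hε : 0 < ε)
    (hq : ContDiff ℝ 2 q) (hqnn : ∀ t, 0 ≤ q t) (hqmass : ∫ t, q t = 1)
    (hM : ∀ t, |deriv (deriv q) t| ≤ M)
    (hKkerMeas : Measurable Kker) (hKkerBdd : ∀ u, Kker u ∈ Set.Icc 0 κ)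
    (hK1int : Integrable (fun u => u * Kker u))
    (hK2int : Integrable (fun u => u ^ 2 * Kker u))
    (hK1 : ∫ u, Kker u = 1)
    (hK0 : ∫ u, u * Kker u = 0)
    (hK2 : ∫ u, u ^ 2 * Kker u = m2)
    (hiid : iIndepFun Ysamp P)
    (hlaw : ∀ k, Measure.map (Ysamp k) P
      = MeasureTheory.volume.withDensity (fun t => ENNReal.ofReal (q t)))
    (N : ℕ) (hN : 1 ≤ N) (y : Fin N → ℝ)
    (h : ℝ) (hh : 0 < h) (δ : ℝ) (hδ : δ ∈ Set.Ioo (0 : ℝ) 1) :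
    1 - δ ≤
      (P {ω : Ω |
        |(-(1 / (N : ℝ)) * ∑ i, Real.log (max
              ((1 / (K * h)) * ∑ k, Kker ((y i - Ysamp k ω) / h)) ε))
          - (-(1 / (N : ℝ)) * ∑ i, Real.log (max (q (y i)) ε))|
        ≤ (κ / (ε * h)) * Real.sqrt (2 * Real.log (2 * N / δ) / K)
            + (m2 * M / (2 * ε)) * h ^ 2}).toReal := by
  obtain ⟨hδ0, hδ1⟩ := hδ
  have hKpos : 0 < K := hK
  have hKr : (0:ℝ) < K := Nat.cast_pos.mpr hKpos
  have hNr : (0:ℝ) < N := Nat.cast_pos.mpr hN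
  -- κ > 0
  have hκpos : 0 < κ := by
    rcases lt_or_eq_of_le hκ with hlt | heq
    · exact hlt
    · exfalso
      have hz : Kker = fun _ => 0 := funext fun u =>
        le_antisymm (by simpa [← heq] using (hKkerBdd u).2) (hKkerBdd u).1
      rw [hz] at hK1
      simp at hK1
  have hlogpos : 0 < Real.log (2 * N / δ) := by
    apply Real.log_pos
    rw [lt_div_iff₀ hδ0]
    have : (1:ℝ) ≤ N := by exact_mod_cast hN
    nlinarith
  set t : ℝ := Real.sqrt (2 * Real.log (2 * N / δ) / K) with ht_def
  have htpos : 0 < t := Real.sqrt_pos.mpr (by positivity)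
  set a : ℝ := κ * t * K with ha_def
  have hapos : 0 < a := by positivity
  have hqmeas : Measurable q := hq.continuous.measurable
  -- the per-point mean
  set m : Fin N → ℝ := fun i => ∫ s, Kker ((y i - s) / h) * q s with hm_def
  have hmean : ∀ (i : Fin N) (k : Fin K),
      ∫ ω, Kker ((y i - Ysamp k ω) / h) ∂P = m i := by
    intro i k
    exact tnll_mean P (Ysamp k) (hYmeas k) q hqmeas hqnn (hlaw k)
      (fun s => Kker ((y i - s) / h))
      (hKkerMeas.comp ((measurable_const.sub measurable_id).div_const h))
  have hXmeas : ∀ (i : Fin N) (k : Fin K),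
      Measurable (fun ω => Kker ((y i - Ysamp k ω) / h)) := fun i k =>
    hKkerMeas.comp ((measurable_const.sub (hYmeas k)).div_const h)
  -- Hoeffding per point
  have hoeff : ∀ i : Fin N,
      (P {ω | a ≤ |(∑ k, Kker ((y i - Ysamp k ω) / h)) - K * m i|}).toReal ≤ δ / N := by
    intro i
    have hindep : iIndepFun
        (fun k ω => Kker ((y i - Ysamp k ω) / h)) P :=
      hiid.comp (fun _ s => Kker ((y i - s) / h))
        (fun _ => hKkerMeas.comp ((measurable_const.sub measurable_id).div_const h))
    have hbdd : ∀ (k : Fin K) ω, Kker ((y i - Ysamp k ω) / h) ∈ Set.Icc 0 κ :=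
      fun k ω => hKkerBdd _
    have hmain := tnll_hoeffding P hKpos (fun k ω => Kker ((y i - Ysamp k ω) / h))
      (hXmeas i) hindep hκpos hbdd (fun k => hmean i k) hapos
    refine hmain.trans ?_
    have hexp : -(a ^ 2) / (2 * K * κ ^ 2) = -Real.log (2 * N / δ) := by
      have hts : t ^ 2 = 2 * Real.log (2 * N / δ) / K := Real.sq_sqrt (by positivity)
      rw [ha_def]
      rw [mul_pow, mul_pow, hts]
      field_simp
    rw [hexp, Real.exp_neg, Real.exp_log (by positivity)]
    refine le_of_eq ?_
    field_simp
  -- the bad event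
  set Bad : Set Ω := ⋃ i : Fin N,
    {ω | a ≤ |(∑ k, Kker ((y i - Ysamp k ω) / h)) - K * m i|} with hBad_def
  have hBadiMeas : ∀ i : Fin N,
      MeasurableSet {ω | a ≤ |(∑ k, Kker ((y i - Ysamp k ω) / h)) - K * m i|} := by
    intro i
    apply measurableSet_le measurable_const
    exact ((Finset.measurable_sum Finset.univ fun k _ => hXmeas i k).sub_const _).abs
  have hBadMeas : MeasurableSet Bad := MeasurableSet.iUnion hBadiMeas
  have hPBad : (P Bad).toReal ≤ δ := by
    have h1 : P Bad ≤ ∑ i : Fin N,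
        P {ω | a ≤ |(∑ k, Kker ((y i - Ysamp k ω) / h)) - K * m i|} :=
      measure_iUnion_fintype_le _ _
    have h2 : (P Bad).toReal ≤ ∑ i : Fin N,
        (P {ω | a ≤ |(∑ k, Kker ((y i - Ysamp k ω) / h)) - K * m i|}).toReal := by
      refine (ENNReal.toReal_mono (by
        exact (ENNReal.sum_lt_top.2 fun i _ => measure_lt_top P _).ne) h1).trans_eq ?_
      exact ENNReal.toReal_sum fun i _ => measure_ne_top P _
    refine h2.trans ?_
    calc ∑ i : Fin N, (P {ω | a ≤ |(∑ k, Kker ((y i - Ysamp k ω) / h)) - K * m i|}).toReal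
        ≤ ∑ _i : Fin N, δ / N := Finset.sum_le_sum fun i _ => hoeff i
      _ = δ := by
          rw [Finset.sum_const, Finset.card_univ, Fintype.card_fin, nsmul_eq_mul]
          field_simp
  -- complement is contained in the good event
  have hsub : Badᶜ ⊆ {ω : Ω |
      |(-(1 / (N : ℝ)) * ∑ i, Real.log (max
            ((1 / (K * h)) * ∑ k, Kker ((y i - Ysamp k ω) / h)) ε))
        - (-(1 / (N : ℝ)) * ∑ i, Real.log (max (q (y i)) ε))|
      ≤ (κ / (ε * h)) * t + (m2 * M / (2 * ε)) * h ^ 2} := by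
    intro ω hω
    rw [hBad_def, Set.compl_iUnion, Set.mem_iInter] at hω
    simp only [Set.mem_compl_iff, Set.mem_setOf_eq, not_le] at hω
    simp only [Set.mem_setOf_eq]
    have key : ∀ i : Fin N,
        |Real.log (max ((1 / (K * h)) * ∑ k, Kker ((y i - Ysamp k ω) / h)) ε)
          - Real.log (max (q (y i)) ε)|
        ≤ (κ / (ε * h)) * t + (m2 * M / (2 * ε)) * h ^ 2 := by
      intro i
      have hωi := hω i
      have hdev : |(1 / (K * h)) * (∑ k, Kker ((y i - Ysamp k ω) / h)) - m i / h|
          ≤ κ * t / h := by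
        have heq : (1 / ((K:ℝ) * h)) * (∑ k, Kker ((y i - Ysamp k ω) / h)) - m i / h
            = ((∑ k, Kker ((y i - Ysamp k ω) / h)) - K * m i) / (K * h) := by
          field_simp
        rw [heq, abs_div, abs_of_pos (by positivity : (0:ℝ) < (K:ℝ) * h)]
        rw [div_le_iff₀ (by positivity : (0:ℝ) < (K:ℝ) * h)]
        calc |(∑ k, Kker ((y i - Ysamp k ω) / h)) - K * m i| ≤ a := le_of_lt hωi
          _ = κ * t / h * (K * h) := by
              rw [ha_def]; field_simp
      have hbias : |m i / h - q (y i)| ≤ m2 * M / 2 * h ^ 2 := by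
        have := tnll_bias hq hM hKkerMeas hKkerBdd hK1int hK2int hK1 hK0 hK2 (y i) h hh
        rw [hm_def]
        exact this
      have htri : |(1 / ((K:ℝ) * h)) * (∑ k, Kker ((y i - Ysamp k ω) / h)) - q (y i)|
          ≤ κ * t / h + m2 * M / 2 * h ^ 2 :=
        (abs_sub_le _ (m i / h) _).trans (add_le_add hdev hbias)
      calc |Real.log (max ((1 / (K * h)) * ∑ k, Kker ((y i - Ysamp k ω) / h)) ε)
            - Real.log (max (q (y i)) ε)|
          ≤ |(1 / ((K:ℝ) * h)) * (∑ k, Kker ((y i - Ysamp k ω) / h)) - q (y i)| / ε :=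
            tnll_log_max_lip hε _ _
        _ ≤ (κ * t / h + m2 * M / 2 * h ^ 2) / ε := by gcongr
        _ = (κ / (ε * h)) * t + (m2 * M / (2 * ε)) * h ^ 2 := by
            field_simp
    have hrw : (-(1 / (N : ℝ)) * ∑ i, Real.log (max
          ((1 / (K * h)) * ∑ k, Kker ((y i - Ysamp k ω) / h)) ε))
        - (-(1 / (N : ℝ)) * ∑ i, Real.log (max (q (y i)) ε))
        = (1 / (N : ℝ)) * ∑ i, (Real.log (max (q (y i)) ε)
            - Real.log (max ((1 / (K * h)) * ∑ k, Kker ((y i - Ysamp k ω) / h)) ε)) := by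
      rw [Finset.sum_sub_distrib]
      ring
    rw [hrw, abs_mul, abs_of_nonneg (by positivity : (0:ℝ) ≤ 1 / (N:ℝ))]
    calc (1 / (N:ℝ)) * |∑ i, (Real.log (max (q (y i)) ε)
            - Real.log (max ((1 / (K * h)) * ∑ k, Kker ((y i - Ysamp k ω) / h)) ε))|
        ≤ (1 / (N:ℝ)) * ∑ i, |Real.log (max (q (y i)) ε)
            - Real.log (max ((1 / (K * h)) * ∑ k, Kker ((y i - Ysamp k ω) / h)) ε)| :=
          mul_le_mul_of_nonneg_left (Finset.abs_sum_le_sum_abs _ _) (by positivity)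
      _ ≤ (1 / (N:ℝ)) * ∑ _i : Fin N, ((κ / (ε * h)) * t + (m2 * M / (2 * ε)) * h ^ 2) := by
          refine mul_le_mul_of_nonneg_left (Finset.sum_le_sum fun i _ => ?_) (by positivity)
          rw [abs_sub_comm]
          exact key i
      _ = (κ / (ε * h)) * t + (m2 * M / (2 * ε)) * h ^ 2 := by
          rw [Finset.sum_const, Finset.card_univ, Fintype.card_fin, nsmul_eq_mul]
          field_simp
  -- conclude
  have hcompl : (P Badᶜ).toReal = 1 - (P Bad).toReal := by
    rw [measure_compl hBadMeas (measure_ne_top _ _), measure_univ]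
    rw [ENNReal.toReal_sub_of_le prob_le_one ENNReal.one_ne_top]
    simp
  calc 1 - δ ≤ 1 - (P Bad).toReal := by linarith
    _ = (P Badᶜ).toReal := hcompl.symm
    _ ≤ _ := ENNReal.toReal_mono (measure_ne_top _ _) (measure_mono hsub)
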